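/- Let λ ∈ ℝ. Real polynomials P(p) = Σᵢ₌₀⁴ aᵢpⁱ and Q(q) = Σᵢ₌₀⁴ bᵢqⁱ satisfy (p-q)²Q''(q) + 6(p-q)Q'(q) + 12Q(q) = (p-q)²P''(p) - 6(p-q)P'(p) + 12P(p) + 4λ(1-p²q²) for all p, q if and only if b₀ = a₀ + λ/3, b₁ = a₁, b₂ = a₂, b₃ = a₃, b₄ = a₄ - λ/3. -/

import Mathlib

lemma quartic_deriv (a₀ a₁ a₂ a₃ a₄ : ℝ) :
    deriv (fun p : ℝ => a₀ + a₁*p + a₂*p^2 + a₃*p^3 + a₄*p^4)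
      = fun p => a₁ + 2*a₂*p + 3*a₃*p^2 + 4*a₄*p^3 := by
  funext p
  have h : HasDerivAt (fun p : ℝ => a₀ + a₁*p + a₂*p^2 + a₃*p^3 + a₄*p^4)
      (a₁ + 2*a₂*p + 3*a₃*p^2 + 4*a₄*p^3) p := by
    have h1 := (hasDerivAt_pow 1 p).const_mul a₁
    have h2 := (hasDerivAt_pow 2 p).const_mul a₂
    have h3 := (hasDerivAt_pow 3 p).const_mul a₃
    have h4 := (hasDerivAt_pow 4 p).const_mul a₄
    have := (((hasDerivAt_const p a₀).add h1).add h2).add h3 |>.add h4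
    simpa [Pi.add_def] using this.congr_deriv (by push_cast; ring)
  exact h.deriv

lemma quartic_deriv2 (a₀ a₁ a₂ a₃ a₄ : ℝ) :
    iteratedDeriv 2 (fun p : ℝ => a₀ + a₁*p + a₂*p^2 + a₃*p^3 + a₄*p^4)
      = fun p => 2*a₂ + 6*a₃*p + 12*a₄*p^2 := by
  rw [show (2:ℕ) = 1 + 1 from rfl, iteratedDeriv_succ, iteratedDeriv_one,
    quartic_deriv]
  have := quartic_deriv a₁ (2*a₂) (3*a₃) (4*a₄) 0
  simp only [zero_mul, add_zero] at this ⊢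
  rw [show (fun p : ℝ => a₁ + 2*a₂*p + 3*a₃*p^2 + 4*a₄*p^3)
      = fun p : ℝ => a₁ + 2*a₂*p + 3*a₃*p^2 + 4*a₄*p^3 + 0*p^4 by
    funext p; ring, quartic_deriv]
  funext p; ring

theorem stmt_4 (lam a₀ a₁ a₂ a₃ a₄ b₀ b₁ b₂ b₃ b₄ : ℝ)
    (P : ℝ → ℝ) (Q : ℝ → ℝ)
    (hPdef : ∀ p, P p = a₀ + a₁*p + a₂*p^2 + a₃*p^3 + a₄*p^4)
    (hQdef : ∀ q, Q q = b₀ + b₁*q + b₂*q^2 + b₃*q^3 + b₄*q^4) :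
    (∀ p q : ℝ,
      (p - q)^2 * iteratedDeriv 2 Q q + 6*(p - q) * deriv Q q + 12 * Q q =
      (p - q)^2 * iteratedDeriv 2 P p - 6*(p - q) * deriv P p + 12 * P p
        + 4*lam*(1 - p^2*q^2))
    ↔ (b₀ = a₀ + lam/3 ∧ b₁ = a₁ ∧ b₂ = a₂ ∧ b₃ = a₃ ∧ b₄ = a₄ - lam/3) := by
  have hP : P = fun p => a₀ + a₁*p + a₂*p^2 + a₃*p^3 + a₄*p^4 := funext hPdef
  have hQ : Q = fun q => b₀ + b₁*q + b₂*q^2 + b₃*q^3 + b₄*q^4 := funext hQdef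
  subst hP hQ
  rw [quartic_deriv, quartic_deriv, quartic_deriv2, quartic_deriv2]
  simp only
  constructor
  · intro h
    have h00 := h 0 0
    have h10 := h 1 0
    have h20 := h 2 0
    have hm10 := h (-1) 0
    have hm20 := h (-2) 0
    have h01 := h 0 1
    have h02 := h 0 2
    have h0m1 := h 0 (-1)
    have h0m2 := h 0 (-2)
    have h11 := h 1 1
    have h21 := h 2 1
    have hm11 := h (-1) 1
    have hm21 := h (-2) 1
    have h12 := h 1 2
    have hm12 := h (-1) 2
    norm_num at h00 h10 h20 hm10 hm20 h01 h02 h0m1 h0m2 h11 h21 hm11 hm21 h12 hm12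
    refine ⟨by linarith, by linarith, by linarith, by linarith, by linarith⟩
  · rintro ⟨h0, h1, h2, h3, h4⟩
    intro p q
    subst h0 h1 h2 h3 h4
    ring
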